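/- For n ≥ 2, equality Vol(B^n_p) · Vol((B^n_p)°) = 4^n / n! holds if and only if p = 1 or p = ∞. -/

import Mathlib

open MeasureTheory
open scoped ENNReal

/-- The open unit ball of the `l^p` norm in `ℝ^n`, for `p ∈ [1, ∞]`. -/
noncomputable def lpBall (n : ℕ) (p : ℝ≥0∞) : Set (Fin n → ℝ) :=
  if p = ⊤ then {x | ∀ i, |x i| < 1} else {x | ∑ i, |x i| ^ p.toReal < 1}

/-- The polar of a subset of `ℝ^n` with respect to the Euclidean inner product. -/
def polarSet {n : ℕ} (S : Set (Fin n → ℝ)) : Set (Fin n → ℝ) :=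
  {x | ∀ y ∈ S, ∑ i, y i * x i ≤ 1}

section MahlerAux

open Real Filter Finset Topology


lemma J_tendsto {u v w : ℝ} (hu : 0 < u) (hv : 0 < v) (hw : 0 < w) (huv : u + v = 1 + w) :
    Tendsto (fun m => ∏ k ∈ range m, ((u + k) * (v + k)) / ((1 + k) * (w + k))) atTop
      (𝓝 (Real.Gamma w / (Real.Gamma u * Real.Gamma v))) := by
  have hGu : Real.Gamma u ≠ 0 := (Real.Gamma_pos_of_pos hu).ne'
  have hGv : Real.Gamma v ≠ 0 := (Real.Gamma_pos_of_pos hv).ne'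
  have h1 : Tendsto (fun N => Real.GammaSeq 1 N * Real.GammaSeq w N /
      (Real.GammaSeq u N * Real.GammaSeq v N)) atTop
      (𝓝 (Real.Gamma 1 * Real.Gamma w / (Real.Gamma u * Real.Gamma v))) :=
    ((Real.GammaSeq_tendsto_Gamma 1).mul (Real.GammaSeq_tendsto_Gamma w)).div
      ((Real.GammaSeq_tendsto_Gamma u).mul (Real.GammaSeq_tendsto_Gamma v))
      (mul_ne_zero hGu hGv)
  rw [Real.Gamma_one, one_mul] at h1
  rw [← Filter.tendsto_add_atTop_iff_nat 1]
  apply h1.congr'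
  filter_upwards [eventually_ge_atTop 1] with N hN
  have hN0 : (0:ℝ) < N := by exact_mod_cast hN
  have hQ : ∀ z : ℝ, 0 < z → (0:ℝ) < ∏ j ∈ range (N + 1), (z + j) := by
    intro z hz
    exact Finset.prod_pos fun j _ => by positivity
  have e1 : (N:ℝ) ^ (1:ℝ) * (N:ℝ) ^ w = (N:ℝ) ^ u * (N:ℝ) ^ v := by
    rw [← Real.rpow_add hN0, ← Real.rpow_add hN0]
    congr 1; linarith
  have key : ∏ k ∈ range (N + 1), ((u + k) * (v + k)) / ((1 + k) * (w + k)) =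
      (∏ j ∈ range (N + 1), (u + j)) * (∏ j ∈ range (N + 1), (v + j)) /
        ((∏ j ∈ range (N + 1), ((1:ℝ) + j)) * (∏ j ∈ range (N + 1), (w + j))) := by
    rw [Finset.prod_div_distrib, Finset.prod_mul_distrib, Finset.prod_mul_distrib]
  rw [key]
  simp only [Real.GammaSeq]
  set Qu := ∏ j ∈ range (N + 1), (u + (j:ℝ)) with hQudef
  set Qv := ∏ j ∈ range (N + 1), (v + (j:ℝ)) with hQvdef
  set Qw := ∏ j ∈ range (N + 1), (w + (j:ℝ)) with hQwdef
  set Q1 := ∏ j ∈ range (N + 1), ((1:ℝ) + (j:ℝ)) with hQ1def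
  have hQu := hQ u hu
  have hQv := hQ v hv
  have hQw := hQ w hw
  have hQ1 := hQ 1 one_pos
  have hF : (0:ℝ) < (N.factorial : ℝ) := by positivity
  rw [← hQudef] at hQu
  rw [← hQvdef] at hQv
  rw [← hQwdef] at hQw
  rw [← hQ1def] at hQ1
  rw [div_mul_div_comm, div_mul_div_comm, div_div_div_eq]
  rw [div_eq_div_iff (by positivity) (by positivity)]
  linear_combination ((N.factorial:ℝ)^2 * Qu * Qv * Q1 * Qw) * e1

noncomputable def ffac (c : ℝ) (n : ℕ) (k : ℕ) : ℝ :=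
  1 + c * (n:ℝ)^2 / (((k:ℝ) + 1) * ((k:ℝ) + 1 + n))

noncomputable def gfac (c : ℝ) (k : ℕ) : ℝ :=
  1 + c / (((k:ℝ) + 1) * ((k:ℝ) + 2))

lemma one_le_ffac {c : ℝ} (hc : 0 ≤ c) (n k : ℕ) : 1 ≤ ffac c n k := by
  unfold ffac
  have : (0:ℝ) ≤ c * (n:ℝ)^2 / (((k:ℝ) + 1) * ((k:ℝ) + 1 + n)) := by positivity
  linarith

lemma one_le_gfac {c : ℝ} (hc : 0 ≤ c) (k : ℕ) : 1 ≤ gfac c k := by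
  unfold gfac
  have : (0:ℝ) ≤ c / (((k:ℝ) + 1) * ((k:ℝ) + 2)) := by positivity
  linarith

lemma ffac_pos {c : ℝ} (hc : 0 ≤ c) (n k : ℕ) : 0 < ffac c n k :=
  lt_of_lt_of_le one_pos (one_le_ffac hc n k)

lemma gfac_pos {c : ℝ} (hc : 0 ≤ c) (k : ℕ) : 0 < gfac c k :=
  lt_of_lt_of_le one_pos (one_le_gfac hc k)

/-- comparison: if `κ + 1 ≤ n * (k + 1)` then the fine factor dominates the coarse factor. -/
lemma gfac_le_ffac {c : ℝ} (hc : 0 ≤ c) {n κ k : ℕ} (h : κ + 1 ≤ n * (k + 1)) :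
    gfac c k ≤ ffac c n κ := by
  unfold ffac gfac
  have hcast : (κ:ℝ) + 1 ≤ (n:ℝ) * ((k:ℝ) + 1) := by exact_mod_cast h
  have hk1 : (0:ℝ) < (k:ℝ) + 1 := by positivity
  have hk2 : (0:ℝ) < (k:ℝ) + 2 := by positivity
  have hκ1 : (0:ℝ) < (κ:ℝ) + 1 := by positivity
  have hκn : (0:ℝ) < (κ:ℝ) + 1 + n := by positivity
  have hn0 : (0:ℝ) ≤ (n:ℝ) := Nat.cast_nonneg n
  gcongr 1 + ?_
  rw [div_le_div_iff₀ (by positivity) (by positivity)]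
  have hmain : ((κ:ℝ) + 1) * ((κ:ℝ) + 1 + n) ≤ (n:ℝ)^2 * (((k:ℝ) + 1) * ((k:ℝ) + 2)) := by
    have h2 : (κ:ℝ) + 1 + n ≤ (n:ℝ) * ((k:ℝ) + 1) + n := by linarith
    have := mul_le_mul hcast h2 (by positivity) (by positivity)
    nlinarith [this]
  calc c * (((κ:ℝ) + 1) * ((κ:ℝ) + 1 + n)) ≤ c * ((n:ℝ)^2 * (((k:ℝ) + 1) * ((k:ℝ) + 2))) :=
        mul_le_mul_of_nonneg_left hmain hc
    _ = c * (n:ℝ)^2 * (((k:ℝ) + 1) * ((k:ℝ) + 2)) := by ring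

lemma grouping {c : ℝ} (hc : 0 ≤ c) {n : ℕ} (hn : 2 ≤ n) :
    ∀ m : ℕ, 1 ≤ m →
      ffac c n 0 * (∏ k ∈ range m, gfac c k) ^ n ≤
        gfac c 0 * ∏ κ ∈ range (n * m), ffac c n κ := by
  have hgnn : ∀ m : ℕ, (0:ℝ) ≤ ∏ k ∈ range m, gfac c k :=
    fun m => Finset.prod_nonneg fun k _ => le_of_lt (gfac_pos hc k)
  have hfnn : ∀ m : ℕ, (0:ℝ) ≤ ∏ κ ∈ range m, ffac c n κ :=
    fun m => Finset.prod_nonneg fun κ _ => le_of_lt (ffac_pos hc n κ)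
  intro m hm
  induction m, hm using Nat.le_induction with
  | base =>
    have hsplit : ∏ κ ∈ range (n * 1), ffac c n κ =
        (∏ κ ∈ range (n - 1), ffac c n (κ + 1)) * ffac c n 0 := by
      rw [mul_one, show range n = range ((n - 1) + 1) by congr 1; omega,
        Finset.prod_range_succ']
    have hbd : (gfac c 0) ^ (n - 1) ≤ ∏ κ ∈ range (n - 1), ffac c n (κ + 1) := by
      have h := Finset.prod_le_prod (s := range (n - 1))
        (f := fun _ => gfac c 0) (g := fun κ => ffac c n (κ + 1))
        (fun _ _ => le_of_lt (gfac_pos hc 0))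
        (fun κ hκ => gfac_le_ffac hc (by simp at hκ; omega))
      simpa [Finset.prod_const, Finset.card_range] using h
    rw [hsplit, Finset.prod_range_one]
    have step : (gfac c 0) ^ (n - 1) * ffac c n 0 ≤
        (∏ κ ∈ range (n - 1), ffac c n (κ + 1)) * ffac c n 0 :=
      mul_le_mul_of_nonneg_right hbd (le_of_lt (ffac_pos hc n 0))
    have e := pow_succ (gfac c 0) (n - 1)
    rw [show n - 1 + 1 = n by omega] at e
    rw [e]
    calc ffac c n 0 * (gfac c 0 ^ (n - 1) * gfac c 0)
        = gfac c 0 * ((gfac c 0) ^ (n - 1) * ffac c n 0) := by ring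
      _ ≤ gfac c 0 * ((∏ κ ∈ range (n - 1), ffac c n (κ + 1)) * ffac c n 0) :=
          mul_le_mul_of_nonneg_left step (le_of_lt (gfac_pos hc 0))
  | succ m hm ih =>
    have hsplit : ∏ κ ∈ range (n * (m + 1)), ffac c n κ =
        (∏ κ ∈ range (n * m), ffac c n κ) * ∏ j ∈ range n, ffac c n (n * m + j) := by
      rw [show n * (m + 1) = n * m + n by ring, Finset.prod_range_add]
    have hbd : (gfac c m) ^ n ≤ ∏ j ∈ range n, ffac c n (n * m + j) := by
      have h := Finset.prod_le_prod (s := range n)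
        (f := fun _ => gfac c m) (g := fun j => ffac c n (n * m + j))
        (fun _ _ => le_of_lt (gfac_pos hc m))
        (fun j hj => gfac_le_ffac hc (by simp at hj; nlinarith))
      simpa [Finset.prod_const, Finset.card_range] using h
    rw [hsplit, Finset.prod_range_succ, mul_pow]
    calc ffac c n 0 * ((∏ k ∈ range m, gfac c k) ^ n * gfac c m ^ n)
        = (ffac c n 0 * (∏ k ∈ range m, gfac c k) ^ n) * gfac c m ^ n := by ring
      _ ≤ (gfac c 0 * ∏ κ ∈ range (n * m), ffac c n κ) * ∏ j ∈ range n, ffac c n (n * m + j) :=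
          mul_le_mul ih hbd (pow_nonneg (le_of_lt (gfac_pos hc m)) n)
            (mul_nonneg (le_of_lt (gfac_pos hc 0)) (hfnn _))
      _ = gfac c 0 * ((∏ κ ∈ range (n * m), ffac c n κ) * ∏ j ∈ range n, ffac c n (n * m + j)) := by
          ring

lemma gamma_prod_lt {n : ℕ} (hn : 2 ≤ n) {s : ℝ} (h0 : 0 < s) (h1 : s < 1) :
    Real.Gamma (1 + n * s) * Real.Gamma (1 + n * (1 - s)) <
      (n.factorial : ℝ) * (Real.Gamma (1 + s) * Real.Gamma (2 - s)) ^ n := by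
  have hn0 : (0:ℝ) < n := by positivity
  set c : ℝ := s * (1 - s) with hcdef
  have hc : 0 < c := by apply mul_pos h0; linarith
  have hu : (0:ℝ) < 1 + n * s := by nlinarith
  have hv : (0:ℝ) < 1 + n * (1 - s) := by nlinarith
  have hu' : (0:ℝ) < 1 + s := by linarith
  have hv' : (0:ℝ) < 2 - s := by linarith
  have hD : 0 < Real.Gamma (1 + n * s) * Real.Gamma (1 + n * (1 - s)) :=
    mul_pos (Real.Gamma_pos_of_pos hu) (Real.Gamma_pos_of_pos hv)
  have hE : 0 < Real.Gamma (1 + s) * Real.Gamma (2 - s) :=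
    mul_pos (Real.Gamma_pos_of_pos hu') (Real.Gamma_pos_of_pos hv')
  -- the fine limit
  have hXlim := J_tendsto hu hv (show (0:ℝ) < (n:ℝ) + 1 by positivity)
    (show (1 + n * s) + (1 + n * (1 - s)) = 1 + ((n:ℝ) + 1) by ring)
  have hfineEq : ∀ m : ℕ, (∏ k ∈ range m,
      ((1 + n * s + k) * (1 + n * (1 - s) + k)) / ((1 + k) * (((n:ℝ) + 1) + k))) =
      ∏ κ ∈ range m, ffac c n κ := by
    intro m
    refine Finset.prod_congr rfl fun k _ => ?_
    have hden : ((k:ℝ) + 1) * ((k:ℝ) + 1 + n) ≠ 0 := by positivity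
    unfold ffac
    rw [div_eq_iff (by positivity)]
    field_simp
    ring
  have hX : Tendsto (fun m => ∏ κ ∈ range m, ffac c n κ) atTop
      (𝓝 (Real.Gamma ((n:ℝ) + 1) /
        (Real.Gamma (1 + n * s) * Real.Gamma (1 + n * (1 - s))))) := by
    refine hXlim.congr fun m => ?_
    exact hfineEq m
  have hmul : Tendsto (fun m : ℕ => n * m) atTop atTop :=
    tendsto_atTop_mono (fun m => Nat.le_mul_of_pos_left m (by omega)) tendsto_id
  have hXsub : Tendsto (fun m => ∏ κ ∈ range (n * m), ffac c n κ) atTop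
      (𝓝 (Real.Gamma ((n:ℝ) + 1) /
        (Real.Gamma (1 + n * s) * Real.Gamma (1 + n * (1 - s))))) := hX.comp hmul
  -- the coarse limit
  have hYlim := J_tendsto hu' hv' (show (0:ℝ) < 2 by norm_num)
    (show (1 + s) + (2 - s) = 1 + (2:ℝ) by ring)
  have hY : Tendsto (fun m => ∏ k ∈ range m, gfac c k) atTop
      (𝓝 (1 / (Real.Gamma (1 + s) * Real.Gamma (2 - s)))) := by
    rw [Real.Gamma_two] at hYlim
    refine hYlim.congr fun m => ?_
    refine Finset.prod_congr rfl fun k _ => ?_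
    unfold gfac
    rw [div_eq_iff (by positivity)]
    field_simp
    ring
  -- pass the grouping inequality to the limit
  set X := Real.Gamma ((n:ℝ) + 1) /
      (Real.Gamma (1 + n * s) * Real.Gamma (1 + n * (1 - s))) with hXdef
  set Y := 1 / (Real.Gamma (1 + s) * Real.Gamma (2 - s)) with hYdef
  have hYpos : 0 < Y := by rw [hYdef]; positivity
  have hkey : ffac c n 0 * Y ^ n ≤ gfac c 0 * X := by
    refine le_of_tendsto_of_tendsto ((hY.pow n).const_mul _) (hXsub.const_mul _) ?_
    filter_upwards [eventually_ge_atTop 1] with m hm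
    exact grouping (le_of_lt hc) hn m hm
  have hstrict : gfac c 0 < ffac c n 0 := by
    unfold ffac gfac
    push_cast
    have e1 : c / (((0:ℝ) + 1) * ((0:ℝ) + 2)) = c / 2 := by norm_num
    have e2 : c * (n:ℝ)^2 / (((0:ℝ) + 1) * ((0:ℝ) + 1 + n)) = c * (n:ℝ)^2 / (1 + n) := by
      norm_num
    rw [e1, e2]
    have : c / 2 < c * (n:ℝ)^2 / (1 + n) := by
      rw [div_lt_div_iff₀ (by norm_num) (by positivity)]
      have hn2 : (2:ℝ) ≤ n := by exact_mod_cast hn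
      have hpos : (0:ℝ) < 2 * (n:ℝ)^2 - (n:ℝ) - 1 := by nlinarith
      nlinarith [mul_pos hc hpos]
    linarith
  have hXY : Y ^ n < X := by
    have h1 : gfac c 0 * Y ^ n < ffac c n 0 * Y ^ n :=
      mul_lt_mul_of_pos_right hstrict (pow_pos hYpos n)
    have h2 : gfac c 0 * Y ^ n < gfac c 0 * X := lt_of_lt_of_le h1 hkey
    exact lt_of_mul_lt_mul_left h2 (le_of_lt (gfac_pos (le_of_lt hc) 0))
  rw [hXdef, hYdef] at hXY
  rw [Real.Gamma_nat_eq_factorial n] at hXY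
  rw [one_div, inv_pow, inv_lt_iff_one_lt_mul₀ (pow_pos hE n), div_mul_eq_mul_div,
    lt_div_iff₀ hD, one_mul] at hXY
  linarith


lemma lpBall_eq {n : ℕ} {p : ℝ≥0∞} (hp : p ≠ ⊤) :
    lpBall n p = {x | ∑ i, |x i| ^ p.toReal < 1} := if_neg hp

lemma lpBall_one {n : ℕ} : lpBall n 1 = {x : Fin n → ℝ | ∑ i, |x i| < 1} := by
  rw [lpBall_eq ENNReal.one_ne_top]
  simp [ENNReal.toReal_one, Real.rpow_one]

lemma lpBall_top {n : ℕ} : lpBall n ⊤ = {x : Fin n → ℝ | ∀ i, |x i| < 1} := if_pos rfl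

lemma sum_single_mul {n : ℕ} (i : Fin n) (c : ℝ) (x : Fin n → ℝ) :
    ∑ j, (Pi.single i c : Fin n → ℝ) j * x j = c * x i := by
  rw [Finset.sum_eq_single i]
  · simp
  · intro j _ hj; simp [Pi.single_apply, hj]
  · simp

lemma sum_abs_single {n : ℕ} (i : Fin n) (c : ℝ) :
    ∑ j, |(Pi.single i c : Fin n → ℝ) j| = |c| := by
  rw [Finset.sum_eq_single i]
  · simp
  · intro j _ hj; simp [Pi.single_apply, hj]
  · simp

lemma polar_lpBall_one {n : ℕ} :
    polarSet (lpBall n 1) = {x : Fin n → ℝ | ∀ i, |x i| ≤ 1} := by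
  rw [lpBall_one]
  ext x
  constructor
  · intro hx i
    by_contra hc
    push_neg at hc
    have hxi : x i ≠ 0 := by intro h; rw [h] at hc; simp at hc; linarith
    set t : ℝ := (1 + |x i|) / 2 with ht
    have ht1 : 1 < t := by rw [ht]; linarith
    have ht2 : t < |x i| := by rw [ht]; linarith
    have ht0 : 0 < t := by linarith
    have hy : (Pi.single i (t / x i) : Fin n → ℝ) ∈ {x : Fin n → ℝ | ∑ i, |x i| < 1} := by
      simp only [Set.mem_setOf_eq]
      rw [sum_abs_single, abs_div]
      rw [div_lt_one (by positivity)]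
      rwa [abs_of_pos ht0]
    have := hx _ hy
    rw [sum_single_mul, div_mul_cancel₀ _ hxi] at this
    linarith
  · intro hx y hy
    calc ∑ j, y j * x j ≤ ∑ j, |y j| := by
          refine Finset.sum_le_sum fun j _ => ?_
          calc y j * x j ≤ |y j * x j| := le_abs_self _
            _ = |y j| * |x j| := abs_mul _ _
            _ ≤ |y j| * 1 := by
                exact mul_le_mul_of_nonneg_left (hx j) (abs_nonneg _)
            _ = |y j| := mul_one _
      _ ≤ 1 := le_of_lt hy

lemma polar_lpBall_top {n : ℕ} :
    polarSet (lpBall n ⊤) = {x : Fin n → ℝ | ∑ i, |x i| ≤ 1} := by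
  rw [lpBall_top]
  ext x
  constructor
  · intro hx
    simp only [Set.mem_setOf_eq]
    by_contra hc
    push_neg at hc
    set S : ℝ := ∑ i, |x i| with hS
    have hS1 : 1 < S := hc
    have hS0 : 0 < S := by linarith
    set t : ℝ := (1 + S) / (2 * S) with ht
    have ht0 : 0 < t := by positivity
    have ht1 : t < 1 := by rw [ht, div_lt_one (by positivity)]; linarith
    set y : Fin n → ℝ := fun i => t * (if 0 ≤ x i then 1 else -1) with hy
    have hmem : y ∈ {x : Fin n → ℝ | ∀ i, |x i| < 1} := by
      intro i
      simp only [hy]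
      rw [abs_mul, abs_of_pos ht0]
      split <;> simp <;> linarith
    have hsum : ∑ i, y i * x i = t * S := by
      rw [hS, Finset.mul_sum]
      refine Finset.sum_congr rfl fun i _ => ?_
      simp only [hy]
      rcases le_or_gt 0 (x i) with h | h
      · rw [if_pos h, abs_of_nonneg h]; ring
      · rw [if_neg (not_le.mpr h), abs_of_neg h]; ring
    have h2 := hx y hmem
    rw [hsum, ht] at h2
    have h3 : (1 + S) / (2 * S) * S = (1 + S) / 2 := by
      field_simp
    rw [h3] at h2
    linarith
  · intro hx y hy
    calc ∑ j, y j * x j ≤ ∑ j, |x j| := by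
          refine Finset.sum_le_sum fun j _ => ?_
          calc y j * x j ≤ |y j * x j| := le_abs_self _
            _ = |y j| * |x j| := abs_mul _ _
            _ ≤ 1 * |x j| := by
                exact mul_le_mul_of_nonneg_right (le_of_lt (hy j)) (abs_nonneg _)
            _ = |x j| := one_mul _
      _ ≤ 1 := hx

lemma volume_l1_ball {n : ℕ} (hn : 1 ≤ n) :
    volume {x : Fin n → ℝ | ∑ i, |x i| < 1} =
      ENNReal.ofReal (2 ^ n / (n.factorial : ℝ)) := by
  have := MeasureTheory.volume_sum_rpow_lt_one (Fin n) (le_refl (1:ℝ))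
  simp only [Real.rpow_one, Fintype.card_fin] at this
  rw [this]
  norm_num [Real.Gamma_two]
  rw [Real.Gamma_nat_eq_factorial]

lemma volume_l1_closed_ball {n : ℕ} (hn : 1 ≤ n) :
    volume {x : Fin n → ℝ | ∑ i, |x i| ≤ 1} =
      ENNReal.ofReal (2 ^ n / (n.factorial : ℝ)) := by
  have hne : Nonempty (Fin n) := Fin.pos_iff_nonempty.mp (by omega)
  have := MeasureTheory.volume_sum_rpow_le (Fin n) (le_refl (1:ℝ)) 1
  simp only [Real.rpow_one, Fintype.card_fin, one_div_one, Real.rpow_one] at this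
  rw [show {x : Fin n → ℝ | ∑ i, |x i| ≤ 1} = {x : Fin n → ℝ | (∑ i, |x i|) ^ (1:ℝ) ≤ 1} by
    simp [Real.rpow_one]] at *
  rw [this]
  norm_num [Real.Gamma_two]
  rw [Real.Gamma_nat_eq_factorial]

lemma volume_closed_cube {n : ℕ} :
    volume {x : Fin n → ℝ | ∀ i, |x i| ≤ 1} = (ENNReal.ofReal 2) ^ n := by
  have : {x : Fin n → ℝ | ∀ i, |x i| ≤ 1} = Set.pi Set.univ (fun _ : Fin n => Set.Icc (-1:ℝ) 1) := by
    ext x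
    simp only [Set.mem_setOf_eq, Set.mem_pi, Set.mem_univ, Set.mem_Icc, forall_const, abs_le]
  rw [this, MeasureTheory.volume_pi_pi]
  simp [Real.volume_Icc]
  norm_num

lemma volume_open_cube {n : ℕ} :
    volume {x : Fin n → ℝ | ∀ i, |x i| < 1} = (ENNReal.ofReal 2) ^ n := by
  have : {x : Fin n → ℝ | ∀ i, |x i| < 1} = Set.pi Set.univ (fun _ : Fin n => Set.Ioo (-1:ℝ) 1) := by
    ext x; simp [abs_lt, Set.mem_pi]
  rw [this, MeasureTheory.volume_pi_pi]
  simp [Real.volume_Ioo]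
  norm_num

lemma mahler_arith {n : ℕ} :
    ENNReal.ofReal (2 ^ n / (n.factorial : ℝ)) * (ENNReal.ofReal 2) ^ n =
      ENNReal.ofReal (4 ^ n / (n.factorial : ℝ)) := by
  rw [← ENNReal.ofReal_pow (by norm_num : (0:ℝ) ≤ 2),
    ← ENNReal.ofReal_mul (by positivity)]
  congr 1
  rw [div_mul_eq_mul_div, ← mul_pow]
  norm_num

lemma holder_subset {n : ℕ} {t q : ℝ} (hpq : t.HolderConjugate q) :
    {x : Fin n → ℝ | ∑ i, |x i| ^ q < 1} ⊆
      polarSet {y : Fin n → ℝ | ∑ i, |y i| ^ t < 1} := by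
  intro x hx y hy
  have h := Real.inner_le_Lp_mul_Lq Finset.univ y x hpq
  refine le_trans h ?_
  have ht0 : 0 < t := hpq.pos
  have hq0 : 0 < q := hpq.symm.pos
  have hy' : (∑ i, |y i| ^ t) ^ (1 / t) ≤ 1 :=
    Real.rpow_le_one (Finset.sum_nonneg fun i _ => Real.rpow_nonneg (abs_nonneg _) _)
      (le_of_lt hy) (by positivity)
  have hx' : (∑ i, |x i| ^ q) ^ (1 / q) ≤ 1 :=
    Real.rpow_le_one (Finset.sum_nonneg fun i _ => Real.rpow_nonneg (abs_nonneg _) _)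
      (le_of_lt hx) (by positivity)
  exact mul_le_one₀ hy' (Real.rpow_nonneg
    (Finset.sum_nonneg fun i _ => Real.rpow_nonneg (abs_nonneg _) _) _) hx'

/-- For `n ≥ 2` and `p ∈ [1, ∞]`, equality `Vol(B^n_p) · Vol((B^n_p)°) = 4^n / n!`
holds if and only if `p = 1` or `p = ∞`. -/
theorem mahler_volume_lpBall_eq_iff (n : ℕ) (hn : 2 ≤ n) (p : ℝ≥0∞) (hp : 1 ≤ p) :
    volume (lpBall n p) * volume (polarSet (lpBall n p)) =
      ENNReal.ofReal (4 ^ n / (Nat.factorial n : ℝ)) ↔ p = 1 ∨ p = ⊤ := by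
  constructor
  · intro h
    by_contra hne
    push_neg at hne
    obtain ⟨hne1, hnetop⟩ := hne
    have hlt : 1 < p := lt_of_le_of_ne hp (Ne.symm hne1)
    have ht1 : 1 < p.toReal := by
      rw [← ENNReal.toReal_one]
      exact (ENNReal.toReal_lt_toReal ENNReal.one_ne_top hnetop).mpr hlt
    set t := p.toReal with htdef
    have hpq := Real.HolderConjugate.conjExponent ht1
    set q := Real.conjExponent t with hqdef
    have hq1 : 1 < q := hpq.symm.lt
    set s : ℝ := 1 / t with hsdef
    have hs0 : 0 < s := by rw [hsdef]; positivity
    have hs1 : s < 1 := by rw [hsdef, div_lt_one (by linarith)]; linarith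
    have hq : 1 / q = 1 - s := by
      have := hpq.inv_add_inv_eq_one
      rw [hsdef]
      rw [one_div, one_div]
      linarith [this]
    -- volume of the ball
    have hball : volume (lpBall n p) =
        ENNReal.ofReal ((2 * Real.Gamma (1 / t + 1)) ^ n / Real.Gamma (n / t + 1)) := by
      rw [lpBall_eq hnetop, ← htdef]
      have := MeasureTheory.volume_sum_rpow_lt_one (Fin n) (le_of_lt ht1)
      simpa [Fintype.card_fin] using this
    -- lower bound for the volume of the polar set
    have hpolar : ENNReal.ofReal ((2 * Real.Gamma (1 / q + 1)) ^ n / Real.Gamma (n / q + 1)) ≤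
        volume (polarSet (lpBall n p)) := by
      have hvol := MeasureTheory.volume_sum_rpow_lt_one (Fin n) (le_of_lt hq1)
      simp only [Fintype.card_fin] at hvol
      rw [← hvol]
      refine measure_mono ?_
      rw [lpBall_eq hnetop, ← htdef]
      exact holder_subset hpq
    -- the strict inequality of products
    set A : ℝ := (2 * Real.Gamma (1 / t + 1)) ^ n / Real.Gamma (n / t + 1) with hA
    set B : ℝ := (2 * Real.Gamma (1 / q + 1)) ^ n / Real.Gamma (n / q + 1) with hB
    have hgamma := gamma_prod_lt hn hs0 hs1
    have hAB : 4 ^ n / (n.factorial : ℝ) < A * B := by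
      have e1 : 1 / t + 1 = 1 + s := by rw [hsdef]; ring
      have e2 : (n : ℝ) / t + 1 = 1 + n * s := by rw [hsdef]; ring
      have e3 : 1 / q + 1 = 2 - s := by rw [hq]; ring
      have e4 : (n : ℝ) / q + 1 = 1 + n * (1 - s) := by
        have : (n : ℝ) / q = n * (1 / q) := by ring
        rw [this, hq]; ring
      rw [hA, hB, e1, e2, e3, e4]
      have hn0 : (0:ℝ) < n := by exact_mod_cast (show 0 < n by omega)
      have hD1 : (0:ℝ) < 1 + n * s := by nlinarith
      have hD2 : (0:ℝ) < 1 + n * (1 - s) := by nlinarith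
      have hD : 0 < Real.Gamma (1 + n * s) * Real.Gamma (1 + n * (1 - s)) :=
        mul_pos (Real.Gamma_pos_of_pos hD1) (Real.Gamma_pos_of_pos hD2)
      have hEe : (2 * Real.Gamma (1 + s)) ^ n * (2 * Real.Gamma (2 - s)) ^ n =
          4 ^ n * (Real.Gamma (1 + s) * Real.Gamma (2 - s)) ^ n := by
        rw [← mul_pow, ← mul_pow]
        congr 1
        ring
      rw [div_mul_div_comm, div_lt_div_iff₀ (by positivity : (0:ℝ) < (n.factorial : ℝ)) hD, hEe]
      calc 4 ^ n * (Real.Gamma (1 + n * s) * Real.Gamma (1 + n * (1 - s)))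
          < 4 ^ n * ((n.factorial : ℝ) * (Real.Gamma (1 + s) * Real.Gamma (2 - s)) ^ n) :=
            mul_lt_mul_of_pos_left hgamma (by positivity)
        _ = 4 ^ n * (Real.Gamma (1 + s) * Real.Gamma (2 - s)) ^ n * (n.factorial : ℝ) := by
            ring
    have hfinal : ENNReal.ofReal (4 ^ n / (n.factorial : ℝ)) <
        volume (lpBall n p) * volume (polarSet (lpBall n p)) := by
      calc ENNReal.ofReal (4 ^ n / (n.factorial : ℝ)) < ENNReal.ofReal (A * B) :=
            (ENNReal.ofReal_lt_ofReal_iff_of_nonneg (by positivity)).mpr hAB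
        _ = ENNReal.ofReal A * ENNReal.ofReal B := by
            have ht0 : (0:ℝ) < t := by linarith
            have g1 : 0 < Real.Gamma (1 / t + 1) := Real.Gamma_pos_of_pos (by positivity)
            have g2 : 0 < Real.Gamma ((n:ℝ) / t + 1) := Real.Gamma_pos_of_pos (by positivity)
            rw [← ENNReal.ofReal_mul (by rw [hA]; positivity)]
        _ ≤ volume (lpBall n p) * volume (polarSet (lpBall n p)) := by
            rw [hball]
            exact mul_le_mul_right hpolar _
    exact (ne_of_gt hfinal) h
  · rintro (rfl | rfl)
    · rw [polar_lpBall_one, lpBall_one, volume_l1_ball (by omega), volume_closed_cube,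
        mahler_arith]
    · rw [polar_lpBall_top, lpBall_top, volume_open_cube, volume_l1_closed_ball (by omega),
        mul_comm, mahler_arith]

end MahlerAux
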